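/- Work in ℂ[z₁,z₂,w₁,w₂] with Poisson bracket {F,G} := i·∑_{j=1,2}(∂_{z_j}F·∂_{w_j}G − ∂_{w_j}F·∂_{z_j}G), and let N := ω₁z₁w₁ + ω₂z₂w₂ with 0 < ω₁ and ω₂ = 3ω₁. Let G = ∑_{|α+β|=4} G_{α,β} z^α w^β be a homogeneous polynomial of degree 4. Define S := ∑ (i·G_{α,β}/(ω₁(α₁−β₁)+ω₂(α₂−β₂))) z^α w^β, where the sum runs over all (α,β) with |α+β| = 4, α ≠ β, and (α,β) ∉ {((3,0),(0,1)), ((0,1),(3,0))}. Then G + {S, N} = ∑_{|α|=2} G_{α,α} z^α w^α + G_{(0,1),(3,0)} z₂w₁³ + G_{(3,0),(0,1)} z₁³w₂. -/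

import Mathlib

open MvPolynomial

/-- The Poisson bracket `{F,G} := i·∑_{j=1,2}(∂_{z_j}F ∂_{w_j}G − ∂_{w_j}F ∂_{z_j}G)`
on `ℂ[z₁,z₂,w₁,w₂]`, where the variables are indexed as `z₁ = X 0`, `z₂ = X 1`,
`w₁ = X 2`, `w₂ = X 3`. -/
noncomputable def poissonBracket (F G : MvPolynomial (Fin 4) ℂ) :
    MvPolynomial (Fin 4) ℂ :=
  C Complex.I *
    ((pderiv 0 F * pderiv 2 G - pderiv 2 F * pderiv 0 G) +
     (pderiv 1 F * pderiv 3 G - pderiv 3 F * pderiv 1 G))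

/-- The exponent vector of the resonant monomial `z₂w₁³`, i.e. `α = (0,1)`, `β = (3,0)`. -/
noncomputable def expResA : Fin 4 →₀ ℕ := Finsupp.equivFunOnFinite.symm ![0, 1, 3, 0]

/-- The exponent vector of the resonant monomial `z₁³w₂`, i.e. `α = (3,0)`, `β = (0,1)`. -/
noncomputable def expResB : Fin 4 →₀ ℕ := Finsupp.equivFunOnFinite.symm ![3, 0, 0, 1]

lemma expResA_eq_iff (d : Fin 4 →₀ ℕ) :
    d = expResA ↔ d 0 = 0 ∧ d 1 = 1 ∧ d 2 = 3 ∧ d 3 = 0 := by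
  constructor
  · rintro rfl
    exact ⟨rfl, rfl, rfl, rfl⟩
  · rintro ⟨h0, h1, h2, h3⟩
    ext k
    fin_cases k <;> simp [expResA, h0, h1, h2, h3]

lemma expResB_eq_iff (d : Fin 4 →₀ ℕ) :
    d = expResB ↔ d 0 = 3 ∧ d 1 = 0 ∧ d 2 = 0 ∧ d 3 = 1 := by
  constructor
  · rintro rfl
    exact ⟨rfl, rfl, rfl, rfl⟩
  · rintro ⟨h0, h1, h2, h3⟩
    ext k
    fin_cases k <;> simp [expResB, h0, h1, h2, h3]

lemma pderiv_mul_X_self (j : Fin 4) (d : Fin 4 →₀ ℕ) (c : ℂ) :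
    pderiv j (monomial d c) * X j = monomial d (c * d j) := by
  rw [pderiv_monomial]
  rcases Nat.eq_zero_or_pos (d j) with h | h
  · simp [h]
  · rw [X, monomial_mul, mul_one]
    have : (d - Finsupp.single j 1) + Finsupp.single j 1 = d := by
      ext k
      simp only [Finsupp.add_apply, Finsupp.tsub_apply, Finsupp.single_apply]
      split_ifs with hk
      · subst hk; omega
      · omega
    rw [this]

lemma bracket_monomial (a b : ℂ) (d : Fin 4 →₀ ℕ) (c : ℂ) :
    poissonBracket (monomial d c) (C a * X 0 * X 2 + C b * X 1 * X 3) =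
    monomial d (Complex.I * c *
      (a * ((d 0 : ℂ) - (d 2 : ℂ)) + b * ((d 1 : ℂ) - (d 3 : ℂ)))) := by
  have h0 : pderiv (0 : Fin 4) (C a * X 0 * X 2 + C b * X 1 * X 3) = C a * X 2 := by
    simp [pderiv_X, Pi.single_apply]; ring
  have h2 : pderiv (2 : Fin 4) (C a * X 0 * X 2 + C b * X 1 * X 3) = C a * X 0 := by
    simp [pderiv_X, Pi.single_apply]
  have h1 : pderiv (1 : Fin 4) (C a * X 0 * X 2 + C b * X 1 * X 3) = C b * X 3 := by
    simp [pderiv_X, Pi.single_apply]; ring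
  have h3 : pderiv (3 : Fin 4) (C a * X 0 * X 2 + C b * X 1 * X 3) = C b * X 1 := by
    simp [pderiv_X, Pi.single_apply]
  unfold poissonBracket
  rw [h0, h1, h2, h3]
  have e0 := pderiv_mul_X_self 0 d c
  have e1 := pderiv_mul_X_self 1 d c
  have e2 := pderiv_mul_X_self 2 d c
  have e3 := pderiv_mul_X_self 3 d c
  calc C Complex.I * ((pderiv 0 (monomial d c) * (C a * X 0) - pderiv 2 (monomial d c) * (C a * X 2)) +
        (pderiv 1 (monomial d c) * (C b * X 1) - pderiv 3 (monomial d c) * (C b * X 3)))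
      = C Complex.I * ((C a * (pderiv 0 (monomial d c) * X 0) - C a * (pderiv 2 (monomial d c) * X 2)) +
        (C b * (pderiv 1 (monomial d c) * X 1) - C b * (pderiv 3 (monomial d c) * X 3))) := by ring
    _ = monomial d (Complex.I * c *
      (a * ((d 0 : ℂ) - (d 2 : ℂ)) + b * ((d 1 : ℂ) - (d 3 : ℂ)))) := by
        rw [e0, e1, e2, e3]
        simp only [C_mul_monomial, ← map_sub, ← map_add]
        congr 1
        ring

lemma poissonBracket_sum {ι : Type*} (s : Finset ι) (f : ι → MvPolynomial (Fin 4) ℂ)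
    (N : MvPolynomial (Fin 4) ℂ) :
    poissonBracket (∑ d ∈ s, f d) N = ∑ d ∈ s, poissonBracket (f d) N := by
  unfold poissonBracket
  rw [map_sum, map_sum, map_sum, map_sum, Finset.sum_mul, Finset.sum_mul,
    Finset.sum_mul, Finset.sum_mul, ← Finset.sum_sub_distrib, ← Finset.sum_sub_distrib,
    ← Finset.sum_add_distrib, Finset.mul_sum]

lemma degree_four {G : MvPolynomial (Fin 4) ℂ} (hG : G.IsHomogeneous 4) {d : Fin 4 →₀ ℕ}
    (hd : d ∈ G.support) : d 0 + d 1 + d 2 + d 3 = 4 := by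
  have := hG (mem_support_iff.mp hd)
  change Finsupp.weight (fun _ => 1) d = 4 at this
  rw [← Finsupp.degree_eq_weight_one, Finsupp.degree_apply,
    Finset.sum_subset (Finset.subset_univ d.support) (by simp), Fin.sum_univ_four] at this
  exact this

/-- Solution of the resonant homological equation at the 3:1 resonance `ω₂ = 3ω₁`:
removing the two resonant monomials from the generating function `S`, one gets
`G + {S,N} = ∑_{|α|=2} G_{α,α} z^α w^α + G_{(0,1),(3,0)} z₂w₁³ + G_{(3,0),(0,1)} z₁³w₂`. -/
theorem homological_equation_resonant (ω₁ ω₂ : ℝ) (hω₁ : 0 < ω₁) (hres : ω₂ = 3 * ω₁)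
    (N : MvPolynomial (Fin 4) ℂ)
    (hN : N = C (ω₁ : ℂ) * X 0 * X 2 + C (ω₂ : ℂ) * X 1 * X 3)
    (G : MvPolynomial (Fin 4) ℂ) (hG : G.IsHomogeneous 4)
    (S : MvPolynomial (Fin 4) ℂ)
    (hS : S = ∑ d ∈ G.support.filter
        (fun d => ¬(d 0 = d 2 ∧ d 1 = d 3) ∧ d ≠ expResA ∧ d ≠ expResB),
      monomial d
        (Complex.I * G.coeff d /
          ((ω₁ * ((d 0 : ℝ) - (d 2 : ℝ)) + ω₂ * ((d 1 : ℝ) - (d 3 : ℝ)) : ℝ) : ℂ))) :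
    G + poissonBracket S N =
      (∑ d ∈ G.support.filter (fun d => d 0 = d 2 ∧ d 1 = d 3),
        monomial d (G.coeff d))
      + monomial expResA (G.coeff expResA)
      + monomial expResB (G.coeff expResB) := by
  classical
  set P : (Fin 4 →₀ ℕ) → Prop :=
    fun d => ¬(d 0 = d 2 ∧ d 1 = d 3) ∧ d ≠ expResA ∧ d ≠ expResB with hP
  -- the bracket term cancels all non-resonant monomials
  have key : ∀ d ∈ G.support.filter P,
      poissonBracket (monomial d
        (Complex.I * G.coeff d /
          ((ω₁ * ((d 0 : ℝ) - (d 2 : ℝ)) + ω₂ * ((d 1 : ℝ) - (d 3 : ℝ)) : ℝ) : ℂ))) N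
      = - monomial d (G.coeff d) := by
    intro d hd
    rw [Finset.mem_filter] at hd
    obtain ⟨hds, hc1, hc2, hc3⟩ := hd
    have hdeg := degree_four hG hds
    set lam : ℝ := ω₁ * ((d 0 : ℝ) - (d 2 : ℝ)) + ω₂ * ((d 1 : ℝ) - (d 3 : ℝ)) with hlam
    have hlam_ne : lam ≠ 0 := by
      intro h
      rw [hlam, hres] at h
      have hE : ((d 0 : ℝ) - (d 2 : ℝ)) + 3 * ((d 1 : ℝ) - (d 3 : ℝ)) = 0 := by
        have : ω₁ * (((d 0 : ℝ) - (d 2 : ℝ)) + 3 * ((d 1 : ℝ) - (d 3 : ℝ))) = 0 := by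
          rw [← h]; ring
        rcases mul_eq_zero.mp this with h' | h'
        · exact absurd h' (ne_of_gt hω₁)
        · exact h'
      have hEZ : ((d 0 : ℤ) - (d 2 : ℤ)) + 3 * ((d 1 : ℤ) - (d 3 : ℤ)) = 0 := by
        exact_mod_cast hE
      rw [Ne, expResA_eq_iff] at hc2
      rw [Ne, expResB_eq_iff] at hc3
      omega
    rw [hN, hres]
    rw [bracket_monomial]
    rw [← map_neg]
    congr 1
    have hlamC : (lam : ℂ) ≠ 0 := by exact_mod_cast hlam_ne
    have hEC : ((ω₁ : ℂ) * ((d 0 : ℂ) - (d 2 : ℂ)) +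
        ((3 * ω₁ : ℝ) : ℂ) * ((d 1 : ℂ) - (d 3 : ℂ))) = (lam : ℂ) := by
      rw [hlam, hres]
      push_cast
      ring
    rw [hEC]
    rw [mul_div_assoc', div_mul_cancel₀ _ hlamC, ← mul_assoc, Complex.I_mul_I, neg_one_mul]
  have hbr : poissonBracket S N = - ∑ d ∈ G.support.filter P, monomial d (G.coeff d) := by
    rw [hS, poissonBracket_sum, ← Finset.sum_neg_distrib]
    exact Finset.sum_congr rfl key
  rw [hbr]
  have hsplit : (∑ d ∈ G.support.filter P, monomial d (G.coeff d)) +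
      (∑ d ∈ G.support.filter (fun d => ¬ P d), monomial d (G.coeff d)) = G := by
    rw [Finset.sum_filter_add_sum_filter_not, support_sum_monomial_coeff]
  have hLHS : G + - ∑ d ∈ G.support.filter P, monomial d (G.coeff d)
      = ∑ d ∈ G.support.filter (fun d => ¬ P d), monomial d (G.coeff d) := by
    linear_combination -hsplit
  rw [hLHS]
  -- now split the complement filter into the three pieces
  have hfe : G.support.filter (fun d => ¬ P d) =
      (G.support.filter (fun d => d 0 = d 2 ∧ d 1 = d 3)) ∪
      (G.support.filter (fun d => d = expResA)) ∪
      (G.support.filter (fun d => d = expResB)) := by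
    rw [← Finset.filter_or, ← Finset.filter_or]
    apply Finset.filter_congr
    intro d _
    simp only [hP, eq_iff_iff]
    tauto
  rw [hfe]
  have hdisj1 : Disjoint (G.support.filter (fun d => d 0 = d 2 ∧ d 1 = d 3))
      (G.support.filter (fun d => d = expResA)) := by
    rw [Finset.disjoint_left]
    intro d h1 h2
    rw [Finset.mem_filter] at h1 h2
    rw [expResA_eq_iff] at h2
    omega
  have hdisj2 : Disjoint ((G.support.filter (fun d => d 0 = d 2 ∧ d 1 = d 3)) ∪
      (G.support.filter (fun d => d = expResA)))
      (G.support.filter (fun d => d = expResB)) := by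
    rw [Finset.disjoint_left]
    intro d h1 h2
    rw [Finset.mem_union] at h1
    rw [Finset.mem_filter, expResB_eq_iff] at h2
    rcases h1 with h1 | h1 <;> rw [Finset.mem_filter] at h1
    · omega
    · rw [expResA_eq_iff] at h1; omega
  rw [Finset.sum_union hdisj2, Finset.sum_union hdisj1]
  have hA : (∑ d ∈ G.support.filter (fun d => d = expResA), monomial d (G.coeff d))
      = monomial expResA (G.coeff expResA) := by
    rw [Finset.filter_eq']
    by_cases h : expResA ∈ G.support
    · simp [h]
    · simp [h, notMem_support_iff.mp h]
  have hB : (∑ d ∈ G.support.filter (fun d => d = expResB), monomial d (G.coeff d))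
      = monomial expResB (G.coeff expResB) := by
    rw [Finset.filter_eq']
    by_cases h : expResB ∈ G.support
    · simp [h]
    · simp [h, notMem_support_iff.mp h]
  rw [hA, hB]
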